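/- Let r₁,…,r_k, s₁,…,s_m be affine-linear forms (with integer coefficients) in variables x̄, and let t₁,…,t_m be nonzero linear forms (with integer coefficients) in variables ȳ. Suppose the system T = {r₁(x̄),…,r_k(x̄), s₁(x̄)+t₁(ȳ),…,s_m(x̄)+t_m(ȳ)} has CS complexity ≤ d, and the system {s₁(x̄)+t₁(ȳ),…,s_m(x̄)+t_m(ȳ)} has CS complexity ≤ d−1. Then the system S = {r₁(x̄),…,r_k(x̄), s₁(x̄)+t₁(ȳ),…,s_m(x̄)+t_m(ȳ), s₁(x̄)+t₁(ȳ′),…,s_m(x̄)+t_m(ȳ′)} of forms in the variables (x̄, ȳ, ȳ′) has CS complexity ≤ d. -/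

import Mathlib

section Defs

/-- The family of (affine-)linear forms, identified with their coefficient vectors in `ℚ^ι`,
has CS complexity `≤ d` at the index `j`: the remaining indices can be partitioned into `d`
classes so that the coefficient vector of the `j`-th form does not lie in the affine span of
the coefficient vectors of any single class. -/
def CSAt {I ι : Type*} (L : I → (ι → ℚ)) (d : ℕ) (j : I) : Prop :=
  ∃ c : I → Fin d, ∀ t : Fin d,
    L j ∉ affineSpan ℚ (L '' {i | i ≠ j ∧ c i = t})

/-- The family of forms has CS complexity `≤ d`: it has CS complexity `≤ d` at every index. -/
def CSBounded {I ι : Type*} (L : I → (ι → ℚ)) (d : ℕ) : Prop :=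
  ∀ j : I, CSAt L d j

end Defs

/-- Pushing affine-span membership through a linear map. -/
lemma memAffineSpanMap {V W : Type*} [AddCommGroup V] [Module ℚ V] [AddCommGroup W]
    [Module ℚ W] (f : V →ₗ[ℚ] W) {s : Set V} {x : V} (h : x ∈ affineSpan ℚ s) :
    f x ∈ affineSpan ℚ (f '' s) := by
  have : (f '' s) = f.toAffineMap '' s := rfl
  rw [this, ← AffineSubspace.map_span f.toAffineMap s]
  exact AffineSubspace.mem_map_of_mem _ h

/-- The "add the two `y`-blocks" linear map. -/
def addMap (a b : ℕ) : ((Fin a ⊕ (Fin b ⊕ Fin b)) → ℚ) →ₗ[ℚ] ((Fin a ⊕ Fin b) → ℚ) where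
  toFun v := Sum.elim (fun x => v (Sum.inl x))
    (fun y => v (Sum.inr (Sum.inl y)) + v (Sum.inr (Sum.inr y)))
  map_add' u v := by funext p; cases p <;> simp <;> ring
  map_smul' c v := by funext p; cases p <;> simp <;> ring

@[simp] lemma addMap_apply (a b : ℕ) (v : (Fin a ⊕ (Fin b ⊕ Fin b)) → ℚ)
    (p : Fin a ⊕ Fin b) :
    addMap a b v p = Sum.elim (fun x => v (Sum.inl x))
      (fun y => v (Sum.inr (Sum.inl y)) + v (Sum.inr (Sum.inr y))) p := rfl

/-- If every element of `s` lies in the kernel of a linear map `g` but `g x ≠ 0`,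
then `x` is not in the affine span of `s`. -/
lemma notMemAffineSpan {V W : Type*} [AddCommGroup V] [Module ℚ V] [AddCommGroup W]
    [Module ℚ W] (g : V →ₗ[ℚ] W) {s : Set V} {x : V}
    (hs : ∀ v ∈ s, g v = 0) (hx : g x ≠ 0) : x ∉ affineSpan ℚ s := by
  intro h
  have h2 := memAffineSpanMap g h
  have himg : g '' s ⊆ ({0} : Set W) := by
    rintro _ ⟨v, hv, rfl⟩; exact hs v hv
  have h3 := affineSpan_mono ℚ himg h2
  rw [AffineSubspace.mem_affineSpan_singleton] at h3
  exact hx h3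

theorem stmt6 (a b K M d : ℕ)
    (rc : Fin K → Fin a → ℤ) (sc : Fin M → Fin a → ℤ) (tc : Fin M → Fin b → ℤ)
    (htc : ∀ i, tc i ≠ 0)
    (hT : CSBounded
      (Sum.elim (fun i : Fin K => (Sum.elim (fun x => (rc i x : ℚ)) (fun _ => 0) : Fin a ⊕ Fin b → ℚ))
        (fun i : Fin M => (Sum.elim (fun x => (sc i x : ℚ)) (fun y => (tc i y : ℚ)) : Fin a ⊕ Fin b → ℚ)))
      d)
    (hst : CSBounded
      (fun i : Fin M => (Sum.elim (fun x => (sc i x : ℚ)) (fun y => (tc i y : ℚ)) : Fin a ⊕ Fin b → ℚ))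
      (d - 1)) :
    CSBounded
      (Sum.elim
        (fun i : Fin K =>
          (Sum.elim (fun x => (rc i x : ℚ)) (fun _ => 0) : Fin a ⊕ (Fin b ⊕ Fin b) → ℚ))
        (Sum.elim
          (fun i : Fin M =>
            (Sum.elim (fun x => (sc i x : ℚ)) (Sum.elim (fun y => (tc i y : ℚ)) (fun _ => 0)) :
              Fin a ⊕ (Fin b ⊕ Fin b) → ℚ))
          (fun i : Fin M =>
            (Sum.elim (fun x => (sc i x : ℚ)) (Sum.elim (fun _ => 0) (fun y => (tc i y : ℚ))) :
              Fin a ⊕ (Fin b ⊕ Fin b) → ℚ))))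
      d := by
  classical
  set LT : (Fin K ⊕ Fin M) → (Fin a ⊕ Fin b → ℚ) :=
    Sum.elim (fun i : Fin K => (Sum.elim (fun x => (rc i x : ℚ)) (fun _ => 0)))
      (fun i : Fin M => (Sum.elim (fun x => (sc i x : ℚ)) (fun y => (tc i y : ℚ)))) with hLT
  set Lst : Fin M → (Fin a ⊕ Fin b → ℚ) :=
    fun i : Fin M => (Sum.elim (fun x => (sc i x : ℚ)) (fun y => (tc i y : ℚ))) with hLst
  set LS : (Fin K ⊕ (Fin M ⊕ Fin M)) → (Fin a ⊕ (Fin b ⊕ Fin b) → ℚ) :=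
    Sum.elim
      (fun i : Fin K => (Sum.elim (fun x => (rc i x : ℚ)) (fun _ => 0)))
      (Sum.elim
        (fun i : Fin M =>
          (Sum.elim (fun x => (sc i x : ℚ)) (Sum.elim (fun y => (tc i y : ℚ)) (fun _ => 0))))
        (fun i : Fin M =>
          (Sum.elim (fun x => (sc i x : ℚ)) (Sum.elim (fun _ => 0) (fun y => (tc i y : ℚ)))))) with hLS
  -- linear maps
  set π₁ : ((Fin a ⊕ (Fin b ⊕ Fin b)) → ℚ) →ₗ[ℚ] ((Fin a ⊕ Fin b) → ℚ) :=
    LinearMap.funLeft ℚ ℚ (Sum.map id Sum.inl) with hπ₁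
  set π₂ : ((Fin a ⊕ (Fin b ⊕ Fin b)) → ℚ) →ₗ[ℚ] ((Fin a ⊕ Fin b) → ℚ) :=
    LinearMap.funLeft ℚ ℚ (Sum.map id Sum.inr) with hπ₂
  set ev₁ : ((Fin a ⊕ (Fin b ⊕ Fin b)) → ℚ) →ₗ[ℚ] (Fin b → ℚ) :=
    LinearMap.funLeft ℚ ℚ (fun y => Sum.inr (Sum.inl y)) with hev₁
  set ev₂ : ((Fin a ⊕ (Fin b ⊕ Fin b)) → ℚ) →ₗ[ℚ] (Fin b → ℚ) :=
    LinearMap.funLeft ℚ ℚ (fun y => Sum.inr (Sum.inr y)) with hev₂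
  have htcQ : ∀ i : Fin M, (fun y => (tc i y : ℚ)) ≠ 0 := by
    intro i h
    exact htc i (funext fun y => by
      have := congrFun h y
      simp only [Pi.zero_apply] at this
      exact_mod_cast this)
  rintro (j | j | j)
  · -- case: an `r` form
    obtain ⟨c, hc⟩ := hT (Sum.inl j)
    refine ⟨Sum.elim (fun i => c (Sum.inl i))
      (Sum.elim (fun i => c (Sum.inr i)) (fun i => c (Sum.inr i))), ?_⟩
    intro t hmem
    apply hc t
    have h2 := memAffineSpanMap (addMap a b) hmem
    have heq : addMap a b (LS (Sum.inl j)) = LT (Sum.inl j) := by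
      funext p; cases p <;> simp [hLS, hLT, hLst]
    have hsub : addMap a b '' (LS '' {i | i ≠ Sum.inl j ∧
        Sum.elim (fun i => c (Sum.inl i))
          (Sum.elim (fun i => c (Sum.inr i)) (fun i => c (Sum.inr i))) i = t})
        ⊆ LT '' {i | i ≠ Sum.inl j ∧ c i = t} := by
      rintro _ ⟨_, ⟨i, ⟨hne, hct⟩, rfl⟩, rfl⟩
      rcases i with i | i | i
      · refine ⟨Sum.inl i, ⟨by simpa using hne, by simpa using hct⟩, ?_⟩
        funext p; cases p <;> simp [hLS, hLT, hLst]
      · refine ⟨Sum.inr i, ⟨by simp, by simpa using hct⟩, ?_⟩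
        funext p; cases p <;> simp [hLS, hLT, hLst]
      · refine ⟨Sum.inr i, ⟨by simp, by simpa using hct⟩, ?_⟩
        funext p; cases p <;> simp [hLS, hLT, hLst]
    rw [heq] at h2
    exact affineSpan_mono ℚ hsub h2
  · -- case: a first-copy form
    obtain ⟨c2, hc2⟩ := hst j
    obtain ⟨c, -⟩ := hT (Sum.inr j)
    have hd : 0 < d := (c (Sum.inr j)).pos
    set ex : Fin d := ⟨d - 1, Nat.sub_lt hd Nat.one_pos⟩ with hex
    refine ⟨Sum.elim (fun _ => ex)
      (Sum.elim (fun i => Fin.castLE (Nat.sub_le d 1) (c2 i)) (fun _ => ex)), ?_⟩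
    intro t hmem
    by_cases ht : t.1 = d - 1
    · -- the "everything with zero first-y-block" class
      refine notMemAffineSpan ev₁ ?_ ?_ hmem
      · rintro _ ⟨i, ⟨hne, hct⟩, rfl⟩
        rcases i with i | i | i
        · funext y; simp [hLS, hev₁]
        · exfalso
          have hct' : Fin.castLE (Nat.sub_le d 1) (c2 i) = t := by simpa using hct
          have hval : (c2 i).1 = t.1 := by simpa using congrArg Fin.val hct'
          have h2 := (c2 i).2
          omega
        · funext y; simp [hLS, hev₁]
      · have : ev₁ (LS (Sum.inr (Sum.inl j))) = fun y => (tc j y : ℚ) := by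
          funext y; simp [hLS, hev₁]
        rw [this]; exact htcQ j
    · have htlt : t.1 < d - 1 := by have := t.2; omega
      apply hc2 ⟨t.1, htlt⟩
      have h2 := memAffineSpanMap π₁ hmem
      have heq : π₁ (LS (Sum.inr (Sum.inl j))) = Lst j := by
        funext p; cases p <;> simp [hLS, hLst, hπ₁]
      have hsub : π₁ '' (LS '' {i | i ≠ Sum.inr (Sum.inl j) ∧
          Sum.elim (fun _ => ex) (Sum.elim (fun i => Fin.castLE (Nat.sub_le d 1) (c2 i)) (fun _ => ex)) i = t})
          ⊆ Lst '' {i | i ≠ j ∧ c2 i = ⟨t.1, htlt⟩} := by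
        rintro _ ⟨_, ⟨i, ⟨hne, hct⟩, rfl⟩, rfl⟩
        rcases i with i | i | i
        · exfalso
          have hct' : ex = t := by simpa using hct
          have : ex.1 = t.1 := congrArg Fin.val hct'
          simp [hex] at this; omega
        · refine ⟨i, ⟨by simpa using hne, ?_⟩, ?_⟩
          · have hct' : Fin.castLE (Nat.sub_le d 1) (c2 i) = t := by simpa using hct
            have hval : (c2 i).1 = t.1 := by simpa using congrArg Fin.val hct'
            exact Fin.ext hval
          · funext p; cases p <;> simp [hLS, hLst, hπ₁]
        · exfalso
          have hct' : ex = t := by simpa using hct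
          have : ex.1 = t.1 := congrArg Fin.val hct'
          simp [hex] at this; omega
      rw [heq] at h2
      exact affineSpan_mono ℚ hsub h2
  · -- case: a second-copy form
    obtain ⟨c2, hc2⟩ := hst j
    obtain ⟨c, -⟩ := hT (Sum.inr j)
    have hd : 0 < d := (c (Sum.inr j)).pos
    set ex : Fin d := ⟨d - 1, Nat.sub_lt hd Nat.one_pos⟩ with hex
    refine ⟨Sum.elim (fun _ => ex)
      (Sum.elim (fun _ => ex) (fun i => Fin.castLE (Nat.sub_le d 1) (c2 i))), ?_⟩
    intro t hmem
    by_cases ht : t.1 = d - 1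
    · refine notMemAffineSpan ev₂ ?_ ?_ hmem
      · rintro _ ⟨i, ⟨hne, hct⟩, rfl⟩
        rcases i with i | i | i
        · funext y; simp [hLS, hev₂]
        · funext y; simp [hLS, hev₂]
        · exfalso
          have hct' : Fin.castLE (Nat.sub_le d 1) (c2 i) = t := by simpa using hct
          have hval : (c2 i).1 = t.1 := by simpa using congrArg Fin.val hct'
          have h2 := (c2 i).2
          omega
      · have : ev₂ (LS (Sum.inr (Sum.inr j))) = fun y => (tc j y : ℚ) := by
          funext y; simp [hLS, hev₂]
        rw [this]; exact htcQ j
    · have htlt : t.1 < d - 1 := by have := t.2; omega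
      apply hc2 ⟨t.1, htlt⟩
      have h2 := memAffineSpanMap π₂ hmem
      have heq : π₂ (LS (Sum.inr (Sum.inr j))) = Lst j := by
        funext p; cases p <;> simp [hLS, hLst, hπ₂]
      have hsub : π₂ '' (LS '' {i | i ≠ Sum.inr (Sum.inr j) ∧
          Sum.elim (fun _ => ex) (Sum.elim (fun _ => ex) (fun i => Fin.castLE (Nat.sub_le d 1) (c2 i))) i = t})
          ⊆ Lst '' {i | i ≠ j ∧ c2 i = ⟨t.1, htlt⟩} := by
        rintro _ ⟨_, ⟨i, ⟨hne, hct⟩, rfl⟩, rfl⟩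
        rcases i with i | i | i
        · exfalso
          have hct' : ex = t := by simpa using hct
          have : ex.1 = t.1 := congrArg Fin.val hct'
          simp [hex] at this; omega
        · exfalso
          have hct' : ex = t := by simpa using hct
          have : ex.1 = t.1 := congrArg Fin.val hct'
          simp [hex] at this; omega
        · refine ⟨i, ⟨by simpa using hne, ?_⟩, ?_⟩
          · have hct' : Fin.castLE (Nat.sub_le d 1) (c2 i) = t := by simpa using hct
            have hval : (c2 i).1 = t.1 := by simpa using congrArg Fin.val hct'
            exact Fin.ext hval
          · funext p; cases p <;> simp [hLS, hLst, hπ₂]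
      rw [heq] at h2
      exact affineSpan_mono ℚ hsub h2
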